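/- Let N be a semiprime natural number with prime factors p and q (p ≠ q). Let d ∈ ℕ, let b_1, ..., b_d be integers, and for each i ∈ {1, ..., d} let f_i = n_{2,i} X² + n_{1,i} X + n_{0,i} ∈ ℤ[X] be a digit polynomial of N to base b_i of degree 2 (so f_i(b_i) = N and n_{2,i} ≠ 0). Suppose gcd(n_{2,i} · b_i, N) = 1 for every i, and define b_{d+i} ∈ Z_N by b_{d+i} ≡ n_{0,i} · n_{2,i}^{−1} · b_i^{−1} (mod N) for 1 ≤ i ≤ d. If gcd(b_j − b_k, N) = 1 for every choice of j ≠ k in {1, ..., 2d}, then ν(∏_{i=1}^d f_i) = 2dp + 2dq − 8d². -/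

import Mathlib

/-- `x ∈ Z_N = {0, ..., N−1}` is suitable for `g ∈ ℤ[X]` if `1 < gcd(g(x), N) < N`;
`nu N g` counts the suitable elements. -/
def nu (N : ℕ) (g : Polynomial ℤ) : ℕ :=
  ((Finset.range N).filter
    (fun (x : ℕ) => 1 < Int.gcd (g.eval ((x : ℤ))) (N : ℤ) ∧
      Int.gcd (g.eval ((x : ℤ))) (N : ℤ) < N)).card

section Aux

/-- Characterization of `1 < gcd(E, pq) < pq` for distinct primes `p, q`. -/
private lemma gcd_char (p q : ℕ) (hp : p.Prime) (hq : q.Prime) (hpq : p ≠ q) (E : ℤ) :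
    (1 < Int.gcd E ((p*q : ℕ) : ℤ) ∧ Int.gcd E ((p*q:ℕ):ℤ) < p*q) ↔
      Xor' ((p:ℤ) ∣ E) ((q:ℤ) ∣ E) := by
  have hppos := hp.pos
  have hqpos := hq.pos
  set m := Int.gcd E ((p*q : ℕ) : ℤ) with hm
  have hmdvd : m ∣ p * q := by
    have h := Int.gcd_dvd_right (a := E) (b := ((p*q:ℕ):ℤ))
    exact_mod_cast h
  have hmE : (m : ℤ) ∣ E := Int.gcd_dvd_left _ _
  have hboth : ((p:ℤ) ∣ E ∧ (q:ℤ) ∣ E) → p * q ∣ m := by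
    rintro ⟨hpE, hqE⟩
    have hco : IsCoprime (p:ℤ) (q:ℤ) :=
      Nat.isCoprime_iff_coprime.mpr ((Nat.coprime_primes hp hq).mpr hpq)
    have h1 : ((p*q : ℕ) : ℤ) ∣ E := by push_cast; exact hco.mul_dvd hpE hqE
    have h2 : ((p*q:ℕ):ℤ) ∣ (m:ℤ) := Int.dvd_coe_gcd h1 dvd_rfl
    exact_mod_cast h2
  constructor
  · rintro ⟨h1, h2⟩
    have hnboth : ¬ ((p:ℤ) ∣ E ∧ (q:ℤ) ∣ E) := by
      intro h
      have := Nat.le_of_dvd (by omega) (hboth h)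
      omega
    obtain ⟨r, hr, hrm⟩ := Nat.exists_prime_and_dvd (by omega : m ≠ 1)
    have hrE : (r:ℤ) ∣ E := (Int.natCast_dvd_natCast.mpr hrm).trans hmE
    rcases (Nat.Prime.dvd_mul hr).mp (hrm.trans hmdvd) with h | h
    · obtain rfl := (Nat.prime_dvd_prime_iff_eq hr hp).mp h
      exact Or.inl ⟨hrE, fun hqE => hnboth ⟨hrE, hqE⟩⟩
    · obtain rfl := (Nat.prime_dvd_prime_iff_eq hr hq).mp h
      exact Or.inr ⟨hrE, fun hpE => hnboth ⟨hpE, hrE⟩⟩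
  · have hmpos : 0 < m := by
      rw [hm, Int.gcd_pos_iff]
      right
      simp only [ne_eq, Nat.cast_eq_zero]
      positivity
    rintro (⟨hpE, hqE⟩ | ⟨hqE, hpE⟩)
    · have hpm : p ∣ m := by
        have h2 : (p:ℤ) ∣ (m:ℤ) := Int.dvd_coe_gcd hpE (by exact_mod_cast dvd_mul_right p q)
        exact_mod_cast h2
      have h1 : 1 < m := lt_of_lt_of_le hp.one_lt (Nat.le_of_dvd hmpos hpm)
      have h2 : m ≠ p * q := by
        intro hmeq
        have hq2 : q ∣ m := hmeq ▸ dvd_mul_left q p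
        exact hqE ((Int.natCast_dvd_natCast.mpr hq2).trans hmE)
      exact ⟨h1, lt_of_le_of_ne (Nat.le_of_dvd (by positivity) hmdvd) h2⟩
    · have hqm : q ∣ m := by
        have h2 : (q:ℤ) ∣ (m:ℤ) := Int.dvd_coe_gcd hqE (by exact_mod_cast dvd_mul_left q p)
        exact_mod_cast h2
      have h1 : 1 < m := lt_of_lt_of_le hq.one_lt (Nat.le_of_dvd hmpos hqm)
      have h2 : m ≠ p * q := by
        intro hmeq
        have hp2 : p ∣ m := hmeq ▸ dvd_mul_right p q
        exact hpE ((Int.natCast_dvd_natCast.mpr hp2).trans hmE)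
      exact ⟨h1, lt_of_le_of_ne (Nat.le_of_dvd (by positivity) hmdvd) h2⟩

/-- Roots of the quadratic `n2 X² + n1 X + n0` modulo a prime `r` dividing `Nz`. -/
private lemma root_char (r : ℤ) (hr : Prime r) (Nz n2 n1 n0 b bb : ℤ)
    (hdig : n2*b^2 + n1*b + n0 = Nz)
    (hrN : r ∣ Nz)
    (hrb : ¬ r ∣ b) (hrn2 : ¬ r ∣ n2)
    (hbbd : Nz ∣ n2*b*bb - n0) (x : ℤ) :
    r ∣ (n2*x^2 + n1*x + n0) ↔ r ∣ (x - b) ∨ r ∣ (x - bb) := by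
  have h0 : r ∣ n2*b*bb - n0 := hrN.trans hbbd
  have h1 : r ∣ b * (n1 + n2*b + n2*bb) := by
    have he : b * (n1 + n2*b + n2*bb) = Nz + (n2*b*bb - n0) := by linear_combination hdig
    rw [he]; exact dvd_add hrN h0
  have hlin : r ∣ (n1 + n2*b + n2*bb) := (hr.dvd_mul.mp h1).resolve_left hrb
  have key : r ∣ (n2*x^2+n1*x+n0) - n2*(x-b)*(x-bb) := by
    have he : (n2*x^2+n1*x+n0) - n2*(x-b)*(x-bb)
        = (n1 + n2*b + n2*bb)*x - (n2*b*bb - n0) := by ring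
    rw [he]; exact dvd_sub (hlin.mul_right x) h0
  constructor
  · intro h
    have h2 : r ∣ n2*(x-b)*(x-bb) := by
      have h3 := dvd_sub h key
      have he : (n2*x^2+n1*x+n0) - ((n2*x^2+n1*x+n0) - n2*(x-b)*(x-bb))
          = n2*(x-b)*(x-bb) := by ring
      rwa [he] at h3
    rcases hr.dvd_mul.mp h2 with h3 | h3
    · exact Or.inl ((hr.dvd_mul.mp h3).resolve_left hrn2)
    · exact Or.inr h3
  · intro h
    have h2 : r ∣ n2*(x-b)*(x-bb) := by
      rcases h with h | h
      · exact ((h.mul_left n2).mul_right _)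
      · exact h.mul_left _
    have h3 := dvd_add h2 key
    have he : n2*(x-b)*(x-bb) + ((n2*x^2+n1*x+n0) - n2*(x-b)*(x-bb))
        = n2*x^2+n1*x+n0 := by ring
    rwa [he] at h3

open Classical in
open Finset in
/-- Counting via CRT: elements of `range (p*q)` whose reductions satisfy an exclusive-or
of memberships. -/
private lemma count_crt (p q : ℕ) (hp : 0 < p) (hq : 0 < q) (hco : Nat.Coprime p q)
    (A : Finset (ZMod p)) (B : Finset (ZMod q)) :
    ((Finset.range (p*q)).filter
      (fun x : ℕ => Xor' ((x : ZMod p) ∈ A) ((x : ZMod q) ∈ B))).card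
      = A.card * (q - B.card) + (p - A.card) * B.card := by
  haveI : NeZero p := ⟨hp.ne'⟩
  haveI : NeZero q := ⟨hq.ne'⟩
  classical
  have hNpos : 0 < p * q := Nat.mul_pos hp hq
  set T : Finset (ZMod p × ZMod q) :=
    univ.filter (fun z => Xor' (z.1 ∈ A) (z.2 ∈ B)) with hT
  have hbij : ((Finset.range (p*q)).filter
      (fun x : ℕ => Xor' ((x : ZMod p) ∈ A) ((x : ZMod q) ∈ B))).card = T.card := by
    apply Finset.card_bij (fun x _ => ((Nat.cast x : ZMod p), (Nat.cast x : ZMod q)))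
    · intro x hx
      simp only [mem_filter, mem_range] at hx
      simp [hT, hx.2]
    · intro x hx y hy hxy
      simp only [mem_filter, mem_range] at hx hy
      have h1 : (x : ZMod p) = (y : ZMod p) := congrArg Prod.fst hxy
      have h2 : (x : ZMod q) = (y : ZMod q) := congrArg Prod.snd hxy
      have m1 : x ≡ y [MOD p] := (ZMod.natCast_eq_natCast_iff _ _ _).mp h1
      have m2 : x ≡ y [MOD q] := (ZMod.natCast_eq_natCast_iff _ _ _).mp h2
      have m3 : x ≡ y [MOD p*q] := (Nat.modEq_and_modEq_iff_modEq_mul hco).mp ⟨m1, m2⟩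
      calc x = x % (p*q) := (Nat.mod_eq_of_lt hx.1).symm
        _ = y % (p*q) := m3
        _ = y := Nat.mod_eq_of_lt hy.1
    · rintro ⟨u, v⟩ hz
      simp only [hT, mem_filter, mem_univ, true_and] at hz
      obtain ⟨k, hk1, hk2⟩ := Nat.chineseRemainder hco u.val v.val
      have e1 : ((k % (p*q) : ℕ) : ZMod p) = u := by
        have h : (k % (p*q)) ≡ u.val [MOD p] :=
          ((Nat.mod_modEq k (p*q)).of_dvd (dvd_mul_right p q)).trans hk1
        rw [(ZMod.natCast_eq_natCast_iff _ _ _).mpr h, ZMod.natCast_zmod_val]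
      have e2 : ((k % (p*q) : ℕ) : ZMod q) = v := by
        have h : (k % (p*q)) ≡ v.val [MOD q] :=
          ((Nat.mod_modEq k (p*q)).of_dvd (dvd_mul_left q p)).trans hk2
        rw [(ZMod.natCast_eq_natCast_iff _ _ _).mpr h, ZMod.natCast_zmod_val]
      refine ⟨k % (p*q), ?_, by rw [e1, e2]⟩
      simp only [mem_filter, mem_range]
      exact ⟨Nat.mod_lt _ hNpos, by rw [e1, e2]; exact hz⟩
  rw [hbij]
  have hsplit : T = (A ×ˢ Bᶜ) ∪ (Aᶜ ×ˢ B) := by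
    ext z
    rw [hT]; refine Finset.mem_filter.trans ?_
    simp only [hT, mem_filter, mem_univ, true_and, Xor', mem_union, mem_product, mem_compl]
    by_cases h1 : z.1 ∈ A <;> by_cases h2 : z.2 ∈ B <;> simp [h1, h2]
  rw [hsplit, Finset.card_union_of_disjoint, Finset.card_product, Finset.card_product,
    Finset.card_compl, Finset.card_compl, ZMod.card, ZMod.card]
  · rw [Finset.disjoint_left]
    rintro ⟨u, v⟩ h1 h2
    rw [mem_product] at h1 h2
    exact (mem_compl.mp h2.1) h1.1

private lemma xor_congr' {a b c d : Prop} (h1 : a ↔ c) (h2 : b ↔ d) :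
    Xor' a b ↔ Xor' c d := by
  unfold Xor'; rw [h1, h2]

private lemma not_dvd_of_gcd_one (pq r : ℕ) (hr : r.Prime) (hrd : r ∣ pq) (a : ℤ)
    (hg : Int.gcd a ((pq:ℕ):ℤ) = 1) : ¬ (r:ℤ) ∣ a := by
  intro hcon
  have h1 : (r:ℤ) ∣ ((Int.gcd a ((pq:ℕ):ℤ) : ℕ) : ℤ) :=
    Int.dvd_coe_gcd hcon (Int.natCast_dvd_natCast.mpr hrd)
  rw [hg] at h1
  have h2 : r ∣ 1 := by exact_mod_cast h1
  have := Nat.dvd_one.mp h2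
  have := hr.one_lt
  omega

private lemma cast_eq_iff_dvd (r : ℕ) (x : ℕ) (c : ℤ) :
    ((x : ZMod r) = (c : ZMod r)) ↔ (r:ℤ) ∣ ((x:ℤ) - c) := by
  rw [show ((x:ℕ):ZMod r) = (((x:ℕ):ℤ):ZMod r) from (Int.cast_natCast x).symm,
    ZMod.intCast_eq_intCast_iff, Int.modEq_iff_dvd, dvd_sub_comm]

private lemma intCast_eq_intCast_iff_dvd (r : ℕ) (a c : ℤ) :
    (((a : ℤ) : ZMod r) = ((c : ℤ) : ZMod r)) ↔ (r:ℤ) ∣ (a - c) := by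
  rw [ZMod.intCast_eq_intCast_iff, Int.modEq_iff_dvd, dvd_sub_comm]

private lemma mem_image_elim {β : Type*} [DecidableEq β] {d : ℕ} (f g : Fin d → β) (u : β) :
    u ∈ Finset.univ.image (Sum.elim f g) ↔ ∃ i, u = f i ∨ u = g i := by
  simp only [Finset.mem_image, Finset.mem_univ, true_and]
  constructor
  · rintro ⟨(i|i), rfl⟩
    exacts [⟨i, Or.inl rfl⟩, ⟨i, Or.inr rfl⟩]
  · rintro ⟨i, rfl | rfl⟩
    exacts [⟨Sum.inl i, rfl⟩, ⟨Sum.inr i, rfl⟩]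

private lemma elim_inj (pq r : ℕ) (hr : r.Prime) (hrd : r ∣ pq) {d : ℕ} (b bb : Fin d → ℤ)
    (hb1 : ∀ j k, j ≠ k → Int.gcd (b j - b k) ((pq:ℕ):ℤ) = 1)
    (hb2 : ∀ j k, j ≠ k → Int.gcd (bb j - bb k) ((pq:ℕ):ℤ) = 1)
    (hb3 : ∀ j k, Int.gcd (b j - bb k) ((pq:ℕ):ℤ) = 1) :
    Function.Injective
      (Sum.elim (fun i => ((b i : ℤ) : ZMod r)) (fun i => ((bb i : ℤ) : ZMod r))) := by
  rintro (i | i) (i' | i') h <;> simp only [Sum.elim_inl, Sum.elim_inr] at h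
  · by_contra hne
    have hne' : i ≠ i' := fun he => hne (by rw [he])
    exact not_dvd_of_gcd_one pq r hr hrd _ (hb1 i i' hne')
      ((intCast_eq_intCast_iff_dvd r _ _).mp h)
  · exact absurd ((intCast_eq_intCast_iff_dvd r _ _).mp h)
      (not_dvd_of_gcd_one pq r hr hrd _ (hb3 i i'))
  · have h2 : (r:ℤ) ∣ (b i' - bb i) := by
      rw [dvd_sub_comm]
      exact (intCast_eq_intCast_iff_dvd r _ _).mp h
    exact absurd h2 (not_dvd_of_gcd_one pq r hr hrd _ (hb3 i' i))
  · by_contra hne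
    have hne' : i ≠ i' := fun he => hne (by rw [he])
    exact not_dvd_of_gcd_one pq r hr hrd _ (hb2 i i' hne')
      ((intCast_eq_intCast_iff_dvd r _ _).mp h)

end Aux

/-- Let `N = p * q` be semiprime with distinct primes `p, q`. Let
`f_i = n_{2,i} X² + n_{1,i} X + n_{0,i}` be digit polynomials of `N` to bases `b_i` of
degree 2 (so `f_i(b_i) = N` and `n_{2,i} ≠ 0`), with `gcd(n_{2,i}·b_i, N) = 1` for all `i`.
Let `b_{d+i} ∈ Z_N` satisfy `b_{d+i} ≡ n_{0,i}·n_{2,i}⁻¹·b_i⁻¹ (mod N)` (equivalently,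
`n_{2,i}·b_i·b_{d+i} ≡ n_{0,i} (mod N)`). If `gcd(b_j − b_k, N) = 1` for all `j ≠ k` in
`{1, ..., 2d}`, then `ν(∏ f_i) = 2dp + 2dq − 8d²`. -/
theorem nu_prod_quadratic_digit_polys (N p q : ℕ) (hp : p.Prime) (hq : q.Prime)
    (hpq : p ≠ q) (hN : N = p * q) (d : ℕ)
    (b n2 n1 n0 : Fin d → ℤ)
    (hn2 : ∀ i, n2 i ≠ 0)
    (hdig : ∀ i, n2 i * (b i) ^ 2 + n1 i * b i + n0 i = (N : ℤ))
    (hcop : ∀ i, Int.gcd (n2 i * b i) (N : ℤ) = 1)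
    (bb : Fin d → ℤ)
    (hbb : ∀ i, 0 ≤ bb i ∧ bb i < N ∧ (N : ℤ) ∣ (n2 i * b i * bb i - n0 i))
    (hb1 : ∀ j k, j ≠ k → Int.gcd (b j - b k) (N : ℤ) = 1)
    (hb2 : ∀ j k, j ≠ k → Int.gcd (bb j - bb k) (N : ℤ) = 1)
    (hb3 : ∀ j k, Int.gcd (b j - bb k) (N : ℤ) = 1) :
    (nu N (∏ i, (Polynomial.C (n2 i) * Polynomial.X ^ 2 + Polynomial.C (n1 i) *
        Polynomial.X + Polynomial.C (n0 i))) : ℤ)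
      = 2 * d * p + 2 * d * q - 8 * d ^ 2 := by
  classical
  subst hN
  haveI : NeZero p := ⟨hp.pos.ne'⟩
  haveI : NeZero q := ⟨hq.pos.ne'⟩
  have hcopq : Nat.Coprime p q := (Nat.coprime_primes hp hq).mpr hpq
  -- root sets modulo p and q
  set A : Finset (ZMod p) := Finset.univ.image
    (Sum.elim (fun i => ((b i : ℤ) : ZMod p)) (fun i => ((bb i : ℤ) : ZMod p))) with hAdef
  set B : Finset (ZMod q) := Finset.univ.image
    (Sum.elim (fun i => ((b i : ℤ) : ZMod q)) (fun i => ((bb i : ℤ) : ZMod q))) with hBdef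
  have hA : A.card = 2 * d := by
    rw [hAdef, Finset.card_image_of_injective _
      (elim_inj (p*q) p hp (dvd_mul_right p q) b bb hb1 hb2 hb3)]
    simp
    omega
  have hB : B.card = 2 * d := by
    rw [hBdef, Finset.card_image_of_injective _
      (elim_inj (p*q) q hq (dvd_mul_left q p) b bb hb1 hb2 hb3)]
    simp
    omega
  -- divisibility of the product by a prime factor
  have hroot : ∀ (r : ℕ), r.Prime → r ∣ p*q → ∀ x : ℕ,
      ((r:ℤ) ∣ ∏ i, (n2 i * (x:ℤ)^2 + n1 i * (x:ℤ) + n0 i) ↔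
        ∃ i, (r:ℤ) ∣ ((x:ℤ) - b i) ∨ (r:ℤ) ∣ ((x:ℤ) - bb i)) := by
    intro r hr hrd x
    rw [Prime.dvd_finset_prod_iff (Nat.prime_iff_prime_int.mp hr)]
    simp only [Finset.mem_univ, true_and]
    apply exists_congr; intro i
    have hnb : ¬ (r:ℤ) ∣ (n2 i * b i) :=
      not_dvd_of_gcd_one (p*q) r hr hrd _ (hcop i)
    exact root_char (r:ℤ) (Nat.prime_iff_prime_int.mp hr) ((p*q:ℕ):ℤ)
      (n2 i) (n1 i) (n0 i) (b i) (bb i) (hdig i)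
      (Int.natCast_dvd_natCast.mpr hrd)
      (fun h => hnb (h.mul_left (n2 i))) (fun h => hnb (h.mul_right (b i)))
      ((hbb i).2.2) (x:ℤ)
  -- membership translation
  have hmemA : ∀ x : ℕ, ((x : ZMod p) ∈ A ↔
      ∃ i, (p:ℤ) ∣ ((x:ℤ) - b i) ∨ (p:ℤ) ∣ ((x:ℤ) - bb i)) := by
    intro x
    rw [hAdef, mem_image_elim]
    apply exists_congr; intro i
    rw [cast_eq_iff_dvd p x (b i), cast_eq_iff_dvd p x (bb i)]
  have hmemB : ∀ x : ℕ, ((x : ZMod q) ∈ B ↔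
      ∃ i, (q:ℤ) ∣ ((x:ℤ) - b i) ∨ (q:ℤ) ∣ ((x:ℤ) - bb i)) := by
    intro x
    rw [hBdef, mem_image_elim]
    apply exists_congr; intro i
    rw [cast_eq_iff_dvd q x (b i), cast_eq_iff_dvd q x (bb i)]
  -- the key pointwise equivalence
  have hkey : ∀ x ∈ Finset.range (p*q),
      ((1 < Int.gcd ((∏ i, (Polynomial.C (n2 i) * Polynomial.X ^ 2 + Polynomial.C (n1 i) *
          Polynomial.X + Polynomial.C (n0 i))).eval ((x:ℕ):ℤ)) ((p*q:ℕ):ℤ) ∧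
        Int.gcd ((∏ i, (Polynomial.C (n2 i) * Polynomial.X ^ 2 + Polynomial.C (n1 i) *
          Polynomial.X + Polynomial.C (n0 i))).eval ((x:ℕ):ℤ)) ((p*q:ℕ):ℤ) < p*q) ↔
        Xor' ((x : ZMod p) ∈ A) ((x : ZMod q) ∈ B)) := by
    intro x _
    have hev : (∏ i, (Polynomial.C (n2 i) * Polynomial.X ^ 2 + Polynomial.C (n1 i) *
        Polynomial.X + Polynomial.C (n0 i))).eval ((x:ℕ):ℤ)
        = ∏ i, (n2 i * (x:ℤ)^2 + n1 i * (x:ℤ) + n0 i) := by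
      rw [Polynomial.eval_prod]
      apply Finset.prod_congr rfl
      intro i _
      simp
    rw [hev, gcd_char p q hp hq hpq]
    exact xor_congr' ((hroot p hp (dvd_mul_right p q) x).trans (hmemA x).symm)
      ((hroot q hq (dvd_mul_left q p) x).trans (hmemB x).symm)
  have hnu : nu (p*q) (∏ i, (Polynomial.C (n2 i) * Polynomial.X ^ 2 + Polynomial.C (n1 i) *
      Polynomial.X + Polynomial.C (n0 i)))
      = 2*d * (q - 2*d) + (p - 2*d) * (2*d) := by
    rw [nu, Finset.filter_congr hkey, count_crt p q hp.pos hq.pos hcopq A B, hA, hB]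
  have h2dp : 2*d ≤ p := by
    have := Finset.card_le_univ A
    rw [hA, ZMod.card] at this
    exact this
  have h2dq : 2*d ≤ q := by
    have := Finset.card_le_univ B
    rw [hB, ZMod.card] at this
    exact this
  rw [hnu]
  push_cast [Nat.cast_sub h2dp, Nat.cast_sub h2dq]
  ring
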